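/- For any directed graph G, every infinitely separable partition {P_1, P_2} of the vertices of G is separable on G. -/

import Mathlib

/-- Infinitary propositional formulas over signature `σ`:
atoms, conjunctions and disjunctions of (index-)sets of formulas, implication. -/
inductive Formula (σ : Type) : Type 1
  | atom : σ → Formula σ
  | conj : (ι : Type) → (ι → Formula σ) → Formula σ
  | disj : (ι : Type) → (ι → Formula σ) → Formula σ
  | imp : Formula σ → Formula σ → Formula σ

namespace Formula

variable {σ : Type}

/-- `⊥` is the empty disjunction. -/
def bot : Formula σ := Formula.disj Empty (fun e => e.elim)

/-- Binary conjunction `F ∧ G`. -/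
def and (F G : Formula σ) : Formula σ := Formula.conj Bool (fun b => if b then F else G)

/-- Binary disjunction `F ∨ G`. -/
def or (F G : Formula σ) : Formula σ := Formula.disj Bool (fun b => if b then F else G)

/-- Negation `¬F` abbreviates `F → ⊥`. -/
def neg (F : Formula σ) : Formula σ := Formula.imp F bot

/-- Conjunction of a set of atoms. -/
def conjAtoms (S : Set σ) : Formula σ := Formula.conj S (fun p => Formula.atom p.val)

/-- Satisfaction of an infinitary formula by an interpretation `I ⊆ σ`. -/
def Sat (I : Set σ) : Formula σ → Prop
  | .atom p => p ∈ I
  | .conj _ f => ∀ i, Sat I (f i)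
  | .disj _ f => ∃ i, Sat I (f i)
  | .imp F G => Sat I F → Sat I G

open Classical in
/-- The reduct `F^I`. -/
noncomputable def reduct (I : Set σ) : Formula σ → Formula σ
  | .atom p => if p ∈ I then Formula.atom p else bot
  | .conj ι f => Formula.conj ι (fun i => reduct I (f i))
  | .disj ι f => Formula.disj ι (fun i => reduct I (f i))
  | .imp F G => if Sat I (Formula.imp F G) then Formula.imp (reduct I F) (reduct I G) else bot

/-- `I` is an `A`-stable model of `F`: `I` is minimal w.r.t. `≤_A`
(`J ≤_A I` iff `J ⊆ I` and `I \ J ⊆ A`) among interpretations satisfying `F^I`. -/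
def AStable (A : Set σ) (I : Set σ) (F : Formula σ) : Prop :=
  Sat I (reduct I F) ∧ ∀ J : Set σ, J ⊆ I → I \ J ⊆ A → Sat J (reduct I F) → J = I

/-- A stable model is a `σ`-stable model. -/
def Stable (I : Set σ) (F : Formula σ) : Prop := AStable Set.univ I F

/-- The strictly positive atoms `P(F)`. -/
def spos : Formula σ → Set σ
  | .atom p => {p}
  | .conj _ f => ⋃ i, spos (f i)
  | .disj _ f => ⋃ i, spos (f i)
  | .imp _ H => spos H

/-- `F` is (syntactically) the formula `⊥`, i.e. an empty disjunction. -/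
def IsBot : Formula σ → Prop
  | .disj ι _ => IsEmpty ι
  | _ => False

open Classical in
mutual
/-- Positive nonnegated atoms `Pnn(F)`. -/
noncomputable def pnn : Formula σ → Set σ
  | .atom p => {p}
  | .conj _ f => ⋃ i, pnn (f i)
  | .disj _ f => ⋃ i, pnn (f i)
  | .imp G H => if IsBot H then ∅ else nnn G ∪ pnn H

/-- Negative nonnegated atoms `Nnn(F)`. -/
noncomputable def nnn : Formula σ → Set σ
  | .atom _ => ∅
  | .conj _ f => ⋃ i, nnn (f i)
  | .disj _ f => ⋃ i, nnn (f i)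
  | .imp G H => if IsBot H then ∅ else pnn G ∪ nnn H
end

/-- The rules of a formula, as antecedent/consequent pairs. -/
def rules : Formula σ → Set (Formula σ × Formula σ)
  | .atom _ => ∅
  | .conj _ f => ⋃ i, rules (f i)
  | .disj _ f => ⋃ i, rules (f i)
  | .imp G H => insert (G, H) (rules H)

/-- Edge relation of the positive dependency graph `DG_A[F]` (vertex set `A`). -/
noncomputable def DGEdge (F : Formula σ) (A : Set σ) (p q : σ) : Prop :=
  p ∈ A ∧ q ∈ A ∧ ∃ R ∈ rules F, p ∈ spos R.2 ∧ q ∈ pnn R.1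

/-- The atoms occurring in a formula. -/
def atoms : Formula σ → Set σ
  | .atom p => {p}
  | .conj _ f => ⋃ i, atoms (f i)
  | .disj _ f => ⋃ i, atoms (f i)
  | .imp G H => atoms G ∪ atoms H

/-- `G` is a definition for the set `Q` of atoms: a conjunction of formulas
`H ∧ C^∧ → q` with `q ∈ Q`, `C ⊆ Q`, and no atom of `Q` occurring in `H`. -/
def IsDefinition (Q : Set σ) (G : Formula σ) : Prop :=
  ∃ (ι : Type) (g : ι → Formula σ), G = Formula.conj ι g ∧
    ∀ i, ∃ (H : Formula σ) (C : Set σ) (q : σ),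
      q ∈ Q ∧ C ⊆ Q ∧ (∀ p ∈ Q, p ∉ atoms H) ∧
      g i = Formula.imp (Formula.and H (conjAtoms C)) (Formula.atom q)

end Formula

section Graph

variable {V : Type*}

/-- An infinite walk in the directed graph with edge relation `E`. -/
def IsInfWalk (E : V → V → Prop) (w : ℕ → V) : Prop := ∀ i, E (w i) (w (i + 1))

/-- The partition `{P₁, P₂}` is infinitely separable: every infinite walk
visits `P₁` or `P₂` only finitely often. -/
def InfSeparable (E : V → V → Prop) (P1 P2 : Set V) : Prop :=
  ∀ w : ℕ → V, IsInfWalk E w → {i | w i ∈ P1}.Finite ∨ {i | w i ∈ P2}.Finite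

/-- `u` and `v` are in the same strongly connected component:
each is reachable from the other. -/
def SameSCC (E : V → V → Prop) (u v : V) : Prop :=
  Relation.ReflTransGen E u v ∧ Relation.ReflTransGen E v u

/-- The partition `{P₁, P₂}` is separable: every strongly connected
component is contained in `P₁` or in `P₂`. -/
def Separable (E : V → V → Prop) (P1 P2 : Set V) : Prop :=
  ∀ u v, SameSCC E u v → ((u ∈ P1 ∧ v ∈ P1) ∨ (u ∈ P2 ∧ v ∈ P2))

end Graph

private lemma cycle_false {V : Type} (E : V → V → Prop) (P1 P2 : Set V)
    (hdisj : Disjoint P1 P2) (h : InfSeparable E P1 P2)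
    {u v : V} (huv : Relation.ReflTransGen E u v) (hvu : Relation.ReflTransGen E v u)
    (hu : u ∈ P1) (hv : v ∈ P2) : False := by
  have hne : u ≠ v := by rintro rfl; exact Set.disjoint_left.mp hdisj hu hv
  obtain ⟨l1, hc1, hl1⟩ := List.exists_isChain_cons_of_relationReflTransGen huv
  obtain ⟨l2, hc2, hl2⟩ := List.exists_isChain_cons_of_relationReflTransGen hvu
  have hl1ne : l1 ≠ [] := by rintro rfl; simp at hl1; exact hne hl1
  have hl2ne : l2 ≠ [] := by rintro rfl; simp at hl2; exact hne hl2.symm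
  set L : List V := (u :: l1) ++ l2 with hL
  set n : ℕ := l1.length + l2.length with hn
  have hnpos : 0 < n := by
    have := List.length_pos_iff.mpr hl1ne; omega
  have hLlen : L.length = n + 1 := by simp [hL, hn]
  have hcast : ∀ (a b : ℕ) (ha : a < L.length) (hb : b < L.length),
      a = b → L[a]'ha = L[b]'hb := by
    intro a b ha hb e; subst e; rfl
  -- chain property
  have hc2'' : List.Chain' E (v :: l2) := hc2
  have hc2' : List.Chain' E l2 := hc2''.tail
  have hchain : L.Chain' E := by
    refine List.IsChain.append (hc1 : List.Chain' E (u :: l1)) hc2' ?_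
    intro x hx y hy
    rw [List.getLast?_eq_getLast (List.cons_ne_nil _ _)] at hx
    obtain ⟨b, t, rfl⟩ := List.exists_cons_of_ne_nil hl2ne
    simp only [List.head?_cons, Option.mem_def, Option.some.injEq] at hx hy
    subst hy
    rw [← hx, hl1]
    exact (List.isChain_cons_cons.mp hc2).1
  have hget : ∀ i, i < n → ∀ (h1 : i < L.length) (h2 : i + 1 < L.length),
      E (L[i]'h1) (L[i+1]'h2) := by
    intro i hi h1 h2
    exact List.isChain_iff_getElem.mp hchain i (by omega)
  set k : ℕ := l1.length with hk
  have hkpos : 0 < k := List.length_pos_iff.mpr hl1ne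
  have hkn : k < n := by have := List.length_pos_iff.mpr hl2ne; omega
  have hL0 : ∀ (hh : 0 < L.length), L[0]'hh = u := fun _ => rfl
  have hLk : ∀ (hh : k < L.length), L[k]'hh = v := by
    intro hh
    have h1 : k < (u :: l1).length := by simp [hk]
    have e1 : L[k]'hh = (u :: l1)[k]'h1 := List.getElem_append_left h1
    rw [e1]
    rw [List.getLast_eq_getElem (l := u :: l1) (List.cons_ne_nil _ _)] at hl1
    have : (u :: l1).length - 1 = k := by simp [hk]
    rw [← hl1]
    congr 1 <;> omega
  have hLn : ∀ (hh : n < L.length), L[n]'hh = u := by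
    intro hh
    have hLne : L ≠ [] := by simp [hL]
    have t1 : l2.getLast hl2ne = u := by
      rw [← hl2]; exact (List.getLast_cons hl2ne).symm
    have e2 : L.getLast hLne = u :=
      (List.getLast_append_of_ne_nil (l := u :: l1) hLne hl2ne).trans t1
    rw [List.getLast_eq_getElem hLne] at e2
    rw [← e2]
    exact hcast _ _ _ _ (by omega)
  set w : ℕ → V := fun i => L[i % n]'(by have := Nat.mod_lt i hnpos; omega) with hw
  have hwalk : IsInfWalk E w := by
    intro i
    have hj : i % n < n := Nat.mod_lt i hnpos
    have hmod : (i + 1) % n = (i % n + 1) % n := (Nat.mod_add_mod i n 1).symm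
    show E (L[i % n]'(by omega)) (L[(i+1) % n]'(by have := Nat.mod_lt (i+1) hnpos; omega))
    by_cases hj1 : i % n + 1 = n
    · have h0 : (i + 1) % n = 0 := by rw [hmod, hj1, Nat.mod_self]
      have t := hget (i % n) hj (by omega) (by omega)
      have e1 : (L[i % n + 1]'(by omega)) = u := (hcast _ n _ (by omega) hj1).trans (hLn _)
      have e2 : (L[(i+1) % n]'(by have := Nat.mod_lt (i+1) hnpos; omega)) = u :=
        (hcast _ 0 _ (by omega) h0).trans (hL0 _)
      rw [e1] at t
      rw [e2]
      exact t
    · have h1 : (i + 1) % n = i % n + 1 := by rw [hmod, Nat.mod_eq_of_lt (by omega)]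
      have t := hget (i % n) hj (by omega) (by omega)
      have e2 : (L[(i+1) % n]'(by have := Nat.mod_lt (i+1) hnpos; omega))
          = (L[i % n + 1]'(by omega)) := hcast _ _ _ _ h1
      rw [e2]
      exact t
  have hm1 : ∀ j : ℕ, w (j * n) ∈ P1 := by
    intro j
    show (L[(j * n) % n]'_) ∈ P1
    rw [(hcast _ 0 _ (by omega) (Nat.mul_mod_left j n)).trans (hL0 _)]
    exact hu
  have hm2 : ∀ j : ℕ, w (k + j * n) ∈ P2 := by
    intro j
    have hm : (k + j * n) % n = k := by
      rw [Nat.add_mul_mod_self_right, Nat.mod_eq_of_lt hkn]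
    show (L[(k + j * n) % n]'_) ∈ P2
    rw [(hcast _ k _ (by omega) hm).trans (hLk _)]
    exact hv
  have hi1 : {i | w i ∈ P1}.Infinite := by
    apply Set.infinite_of_injective_forall_mem (f := fun j : ℕ => j * n) _ hm1
    intro a b hab
    simpa using Nat.eq_of_mul_eq_mul_right hnpos hab
  have hi2 : {i | w i ∈ P2}.Infinite := by
    apply Set.infinite_of_injective_forall_mem (f := fun j : ℕ => k + j * n) _ hm2
    intro a b hab
    simp only [add_right_inj] at hab
    exact Nat.eq_of_mul_eq_mul_right hnpos hab
  rcases h w hwalk with hf | hf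
  · exact hi1 hf
  · exact hi2 hf

/-- every infinitely separable partition of a directed graph
is separable. -/
theorem infSeparable_separable {V : Type} (E : V → V → Prop) (P1 P2 : Set V)
    (hdisj : Disjoint P1 P2) (hcover : P1 ∪ P2 = Set.univ)
    (h : InfSeparable E P1 P2) : Separable E P1 P2 := by
  intro u v hscc
  obtain ⟨huv, hvu⟩ := hscc
  have hsym : InfSeparable E P2 P1 := fun w hw => (h w hw).symm
  have hu : u ∈ P1 ∪ P2 := hcover ▸ Set.mem_univ u
  have hv : v ∈ P1 ∪ P2 := hcover ▸ Set.mem_univ v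
  rcases hu with hu | hu <;> rcases hv with hv | hv
  · exact Or.inl ⟨hu, hv⟩
  · exact absurd (cycle_false E P1 P2 hdisj h huv hvu hu hv) not_false
  · exact absurd (cycle_false E P2 P1 hdisj.symm hsym huv hvu hu hv) not_false
  · exact Or.inr ⟨hu, hv⟩
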